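/- Let G be a finite simple quasi-regularizable graph on n vertices, i.e., a graph such that |S| ≤ |N(S)| holds for every independent set S ⊆ V(G), where N(S) = ∪_{v ∈ S} {u : uv ∈ E(G)}. Then avd(G) ≤ 2n/3. -/
import Mathlib


open Finset

/-- `S` is a dominating set of `G`: every vertex is in `S` or adjacent to a vertex of `S`. -/
def SimpleGraph.IsDomSet {V : Type*} (G : SimpleGraph V) (S : Finset V) : Prop :=
  ∀ v : V, v ∈ S ∨ ∃ u ∈ S, G.Adj u v

/-- The family of all dominating sets of `G`. -/
noncomputable def SimpleGraph.domSets {V : Type*} [Fintype V] (G : SimpleGraph V) :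
    Finset (Finset V) :=
  @Finset.filter _ (fun S => G.IsDomSet S) (Classical.decPred _) Finset.univ

/-- The average order (cardinality) of a dominating set of `G`. -/
noncomputable def SimpleGraph.avd {V : Type*} [Fintype V] (G : SimpleGraph V) : ℝ :=
  (∑ S ∈ G.domSets, (S.card : ℝ)) / (G.domSets).card
/-- If `G` is quasi-regularizable (i.e. `|S| ≤ |N(S)|` for every independent set `S`,
by Berge's characterization), then `avd(G) ≤ 2n/3`. -/
theorem avd_le_of_quasiRegularizable {V : Type*} [Fintype V] [DecidableEq V]
    (G : SimpleGraph V) [DecidableRel G.Adj] (n : ℕ) (hn : n = Fintype.card V)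
    (hqr : ∀ S : Finset V, (∀ u ∈ S, ∀ v ∈ S, ¬ G.Adj u v) →
      S.card ≤ (S.biUnion (fun v => G.neighborFinset v)).card) :
    G.avd ≤ 2 * (n : ℝ) / 3 := by
  classical
  have hmemD : ∀ S : Finset V, S ∈ G.domSets ↔ G.IsDomSet S := by
    intro S
    unfold SimpleGraph.domSets
    rw [Finset.mem_filter]
    simp
  -- Step 1: the full Hall condition follows from the independent-set Hall condition.
  have hall : ∀ A : Finset V, A.card ≤ (A.biUnion fun v => G.neighborFinset v).card := by
    intro A
    set NA := A.biUnion fun v => G.neighborFinset v with hNAdef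
    set I := A.filter fun v => v ∉ NA with hIdef
    have hIA : ∀ v ∈ I, v ∈ A ∧ v ∉ NA := fun v hv => Finset.mem_filter.mp hv
    have hIind : ∀ u ∈ I, ∀ v ∈ I, ¬ G.Adj u v := by
      intro u hu v hv hadj
      exact (hIA u hu).2 (Finset.mem_biUnion.mpr ⟨v, (hIA v hv).1,
        (SimpleGraph.mem_neighborFinset _ _ _).mpr hadj.symm⟩)
    have h1 := hqr I hIind
    have hsub : (I.biUnion fun v => G.neighborFinset v) ⊆ NA \ A := by
      intro z hz
      obtain ⟨u, hu, hz'⟩ := Finset.mem_biUnion.mp hz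
      have hzadj : G.Adj u z := (SimpleGraph.mem_neighborFinset _ _ _).mp hz'
      refine Finset.mem_sdiff.mpr ⟨Finset.mem_biUnion.mpr ⟨u, (hIA u hu).1, hz'⟩, fun hzA => ?_⟩
      exact (hIA u hu).2 (Finset.mem_biUnion.mpr ⟨z, hzA,
        (SimpleGraph.mem_neighborFinset _ _ _).mpr hzadj.symm⟩)
    have h2 : I.card ≤ (NA \ A).card := h1.trans (Finset.card_le_card hsub)
    have h3 : (A.filter fun v => ¬ v ∉ NA).card = (NA ∩ A).card := by
      congr 1
      ext v
      simp only [Finset.mem_filter, Finset.mem_inter, not_not]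
      tauto
    have h4 : I.card + (A.filter fun v => ¬ v ∉ NA).card = A.card := by
      rw [hIdef]; exact Finset.card_filter_add_card_filter_not _
    have h5 : (NA \ A).card + (NA ∩ A).card = NA.card := Finset.card_sdiff_add_card_inter NA A
    omega
  -- Step 2: Hall's marriage theorem gives an injective "partner" function.
  obtain ⟨f, hfinj, hfmem⟩ :=
    (Finset.all_card_le_biUnion_card_iff_exists_injective (fun v => G.neighborFinset v)).mp hall
  have hfadj : ∀ v, G.Adj v (f v) := fun v => (SimpleGraph.mem_neighborFinset _ _ _).mp (hfmem v)
  -- Notation: closed neighbourhood, private neighbours.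
  set Nc : V → Finset V := fun z => insert z (G.neighborFinset z) with hNc
  have hmemNc : ∀ z y : V, y ∈ Nc z ↔ y = z ∨ G.Adj z y := by
    intro z y
    simp [hNc, SimpleGraph.mem_neighborFinset]
  set P : Finset V → V → Finset V := fun S v => Finset.univ.filter fun z => Nc z ∩ S = {v}
    with hP
  have hmemP : ∀ S v z, z ∈ P S v ↔ Nc z ∩ S = {v} := by
    intro S v z; simp [hP]
  -- basic fact: a private neighbour is outside S (when v, f v ∈ S).
  have hPout : ∀ S v z, v ∈ S → f v ∈ S → z ∈ P S v → z ∉ S := by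
    intro S v z hv hfv hz hzS
    have hzeq : z ∈ Nc z ∩ S := Finset.mem_inter.mpr ⟨(hmemNc z z).mpr (Or.inl rfl), hzS⟩
    rw [(hmemP S v z).mp hz] at hzeq
    have hzv : z = v := Finset.mem_singleton.mp hzeq
    subst hzv
    have hfvNc : f z ∈ Nc z ∩ S :=
      Finset.mem_inter.mpr ⟨(hmemNc z (f z)).mpr (Or.inr (hfadj z)), hfv⟩
    rw [(hmemP S z (z)).mp hz] at hfvNc
    exact (hfadj z).ne (Finset.mem_singleton.mp hfvNc).symm
  -- erasing a vertex with no private neighbour keeps domination.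
  have hErase : ∀ S v, S ∈ G.domSets → v ∈ S → f v ∈ S → P S v = ∅ →
      S.erase v ∈ G.domSets := by
    intro S v hS hv hfv hPe
    rw [hmemD] at hS ⊢
    intro x
    by_cases hxv : x = v
    · subst hxv
      refine Or.inr ⟨f x, Finset.mem_erase.mpr ⟨(hfadj x).ne', hfv⟩, (hfadj x).symm⟩
    · by_cases hxS : x ∈ S
      · exact Or.inl (Finset.mem_erase.mpr ⟨hxv, hxS⟩)
      · -- x ∉ S : Nc x ∩ S is nonempty and ≠ {v}
        have hne : (Nc x ∩ S).Nonempty := by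
          rcases hS x with hx | ⟨u, huS, hadj⟩
          · exact absurd hx hxS
          · exact ⟨u, Finset.mem_inter.mpr ⟨(hmemNc x u).mpr (Or.inr hadj.symm), huS⟩⟩
        have hnsing : Nc x ∩ S ≠ {v} := by
          intro hcon
          have : x ∈ P S v := (hmemP S v x).mpr hcon
          rw [hPe] at this
          exact absurd this (Finset.notMem_empty x)
        obtain ⟨w, hw, hwv⟩ : ∃ w ∈ Nc x ∩ S, w ≠ v := by
          by_contra hc
          push_neg at hc
          obtain ⟨w0, hw0⟩ := hne
          exact hnsing (Finset.eq_singleton_iff_unique_mem.mpr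
            ⟨(hc w0 hw0) ▸ hw0, fun b hb => hc b hb⟩)
        have hwS : w ∈ S := (Finset.mem_inter.mp hw).2
        have hwx : w ≠ x := fun h => hxS (h ▸ hwS)
        have hadj : G.Adj x w := by
          rcases (hmemNc x w).mp (Finset.mem_inter.mp hw).1 with h | h
          · exact absurd h hwx
          · exact h
        exact Or.inr ⟨w, Finset.mem_erase.mpr ⟨hwv, hwS⟩, hadj.symm⟩
  -- Step 3: the counting sets.
  set D := G.domSets with hD
  set A : Finset (Σ _ : Finset V, V) := D.sigma fun S => S with hA
  set B : Finset (Σ _ : Finset V, V) := D.sigma fun S => Finset.univ \ S with hB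
  -- the 2-to-1 map
  set Φ : (Σ _ : Finset V, V) → (Σ _ : Finset V, V) × Bool := fun p =>
    if hc : f p.2 ∈ p.1 then
      (if h : (P p.1 p.2).Nonempty then (⟨p.1, h.choose⟩, false)
       else (⟨p.1.erase p.2, p.2⟩, true))
    else (⟨p.1, f p.2⟩, false) with hΦ
  have hmaps : ∀ p ∈ A, Φ p ∈ B ×ˢ (Finset.univ : Finset Bool) := by
    rintro ⟨S, v⟩ hp
    rw [hA, Finset.mem_sigma] at hp
    obtain ⟨hSD, hvS⟩ := hp
    rw [hΦ]
    dsimp only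
    refine Finset.mem_product.mpr ⟨?_, Finset.mem_univ _⟩
    by_cases hc : f v ∈ S
    · rw [dif_pos hc]
      by_cases h : (P S v).Nonempty
      · rw [dif_pos h]
        rw [hB, Finset.mem_sigma]
        exact ⟨hSD, Finset.mem_sdiff.mpr ⟨Finset.mem_univ _,
          hPout S v h.choose hvS hc h.choose_spec⟩⟩
      · rw [dif_neg h]
        rw [hB, Finset.mem_sigma]
        refine ⟨hErase S v hSD hvS hc (Finset.not_nonempty_iff_eq_empty.mp h), ?_⟩
        exact Finset.mem_sdiff.mpr ⟨Finset.mem_univ _, Finset.notMem_erase v S⟩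
    · rw [dif_neg hc]
      rw [hB, Finset.mem_sigma]
      exact ⟨hSD, Finset.mem_sdiff.mpr ⟨Finset.mem_univ _, hc⟩⟩
  have hinj : Set.InjOn Φ A := by
    rintro ⟨S, v⟩ hp ⟨S', v'⟩ hq heq
    rw [hA, Finset.coe_sigma] at hp hq
    rw [Set.mem_sigma_iff] at hp hq
    obtain ⟨hSD, hvS⟩ := hp
    obtain ⟨hSD', hvS'⟩ := hq
    simp only [Finset.mem_coe] at hSD hvS hSD' hvS'
    rw [hΦ] at heq
    dsimp only at heq
    by_cases hc : f v ∈ S <;> by_cases hc' : f v' ∈ S'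
    · rw [dif_pos hc, dif_pos hc'] at heq
      by_cases h : (P S v).Nonempty <;> by_cases h' : (P S' v').Nonempty
      · rw [dif_pos h, dif_pos h'] at heq
        -- both case 2
        simp only [Prod.mk.injEq, Sigma.mk.inj_iff] at heq
        obtain ⟨⟨hS, hz⟩, -⟩ := heq
        subst hS
        have hz' : h.choose = h'.choose := eq_of_heq hz
        have e1 := (hmemP S v h.choose).mp h.choose_spec
        have e2 := (hmemP S v' h'.choose).mp h'.choose_spec
        rw [hz'] at e1
        rw [e1] at e2
        have : v' = v := Finset.mem_singleton.mp (e2 ▸ Finset.mem_singleton_self v')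
        simp [this]
      · rw [dif_pos h, dif_neg h'] at heq
        simp at heq
      · rw [dif_neg h, dif_pos h'] at heq
        simp at heq
      · rw [dif_neg h, dif_neg h'] at heq
        -- both case 3
        simp only [Prod.mk.injEq, Sigma.mk.inj_iff] at heq
        obtain ⟨⟨hS, hz⟩, -⟩ := heq
        have hv : v = v' := eq_of_heq hz
        subst hv
        have : S = S' := by
          rw [← Finset.insert_erase hvS, ← Finset.insert_erase hvS', hS]
        simp [this]
    · rw [dif_pos hc, dif_neg hc'] at heq
      by_cases h : (P S v).Nonempty
      · rw [dif_pos h] at heq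
        -- p case 2, q case 1 : contradiction
        simp only [Prod.mk.injEq, Sigma.mk.inj_iff] at heq
        obtain ⟨⟨hS, hz⟩, -⟩ := heq
        subst hS
        have hz' : h.choose = f v' := eq_of_heq hz
        have e1 := (hmemP S v h.choose).mp h.choose_spec
        have hv'mem : v' ∈ Nc h.choose ∩ S := by
          refine Finset.mem_inter.mpr ⟨(hmemNc h.choose v').mpr (Or.inr ?_), hvS'⟩
          rw [hz']
          exact (hfadj v').symm
        rw [e1] at hv'mem
        have hvv' : v' = v := Finset.mem_singleton.mp hv'mem
        have : f v ∈ S := hc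
        rw [← hvv', ← hz'] at this
        exact absurd this (hPout S v h.choose hvS hc h.choose_spec)
      · rw [dif_neg h] at heq
        simp at heq
    · rw [dif_neg hc, dif_pos hc'] at heq
      by_cases h' : (P S' v').Nonempty
      · rw [dif_pos h'] at heq
        simp only [Prod.mk.injEq, Sigma.mk.inj_iff] at heq
        obtain ⟨⟨hS, hz⟩, -⟩ := heq
        subst hS
        have hz' : f v = h'.choose := eq_of_heq hz
        have e1 := (hmemP S v' h'.choose).mp h'.choose_spec
        have hvmem : v ∈ Nc h'.choose ∩ S := by
          refine Finset.mem_inter.mpr ⟨(hmemNc h'.choose v).mpr (Or.inr ?_), hvS⟩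
          rw [← hz']
          exact (hfadj v).symm
        rw [e1] at hvmem
        have hvv' : v = v' := Finset.mem_singleton.mp hvmem
        have : f v' ∈ S := hc'
        rw [← hvv'] at this
        rw [hz'] at this
        exact absurd this (hPout S v' h'.choose hvS' hc' h'.choose_spec)
      · rw [dif_neg h'] at heq
        simp at heq
    · rw [dif_neg hc, dif_neg hc'] at heq
      -- both case 1
      simp only [Prod.mk.injEq, Sigma.mk.inj_iff] at heq
      obtain ⟨⟨hS, hz⟩, -⟩ := heq
      subst hS
      have : f v = f v' := eq_of_heq hz
      simp [hfinj this]
  have hcardAB : A.card ≤ 2 * B.card := by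
    have := Finset.card_le_card_of_injOn Φ hmaps hinj
    rwa [Finset.card_product, Finset.card_univ, Fintype.card_bool, mul_comm] at this
  -- Step 4: arithmetic.
  have hAcard : A.card = ∑ S ∈ D, S.card := by rw [hA, Finset.card_sigma]
  have hBcard : B.card = ∑ S ∈ D, (Finset.univ \ S).card := by rw [hB, Finset.card_sigma]
  have hpair : ∀ S : Finset V, S.card + (Finset.univ \ S).card = n := by
    intro S
    rw [Finset.card_sdiff_of_subset (Finset.subset_univ S), Finset.card_univ, ← hn]
    have : S.card ≤ n := by
      rw [hn]
      exact (Finset.card_le_card (Finset.subset_univ S)).trans (le_of_eq Finset.card_univ)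
    omega
  have hsum : (∑ S ∈ D, S.card) + (∑ S ∈ D, (Finset.univ \ S).card) = n * D.card := by
    rw [← Finset.sum_add_distrib]
    rw [Finset.sum_congr rfl fun S _ => hpair S]
    rw [Finset.sum_const, smul_eq_mul, mul_comm]
  have hkey : 3 * (∑ S ∈ D, S.card) ≤ 2 * (n * D.card) := by
    rw [hAcard] at hcardAB
    rw [hBcard] at hcardAB
    omega
  have hDne : (0 : ℝ) < D.card := by
    have : Finset.univ ∈ D := by
      rw [hD, hmemD]
      intro v
      exact Or.inl (Finset.mem_univ v)
    have : 0 < D.card := Finset.card_pos.mpr ⟨_, this⟩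
    exact_mod_cast this
  rw [SimpleGraph.avd]
  rw [div_le_iff₀ hDne]
  have hcast : (∑ S ∈ G.domSets, (S.card : ℝ)) = ((∑ S ∈ D, S.card : ℕ) : ℝ) := by
    rw [hD, Nat.cast_sum]
  rw [hcast]
  have : ((3 : ℝ)) * ((∑ S ∈ D, S.card : ℕ) : ℝ) ≤ 2 * (n * D.card) := by
    exact_mod_cast hkey
  rw [hD] at this ⊢
  push_cast at this ⊢
  linarith
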